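/- Let n ≥ 3 and work in the 2n×2n complex matrices. Set x = E 1 2 + E (n+1) (n+2), y = E 1 1 - E 2 2 + E (n+1) (n+1) - E (n+2) (n+2), and z = E 2 (n+1) + E (n+2) 1. If λ ∈ ℂ satisfies ⁅x, ⁅y, z⁆⁆ + ⁅y, ⁅z, x⁆⁆ + λ • ⁅z, ⁅x, y⁆⁆ = 0, then λ = 1. (This is the graded Hom-Jacobi identity for the automorphism ȷ(λ) of the queer Lie superalgebra Q(n-1) evaluated at the even elements x, y and the odd element z; in particular λ = -1 is impossible, which rules out the automorphism σ_q² = ȷ(-1).) -/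

import Mathlib

open Matrix

/-- The Hom-Jacobi identity for `ȷ(λ)` on the queer Lie superalgebra `Q(n-1)` at
the even elements `x = E 1 2 + E (n+1) (n+2)`,
`y = E 1 1 - E 2 2 + E (n+1) (n+1) - E (n+2) (n+2)` and the odd element
`z = E 2 (n+1) + E (n+2) 1` (1-based indexing) forces `λ = 1`. -/
theorem jmap_homJacobi_queer_forces_lambda_eq_one (n : ℕ) (hn : 3 ≤ n) (l : ℂ)
    (x y z : Matrix (Fin (2 * n)) (Fin (2 * n)) ℂ)
    (hx : x = Matrix.single ⟨0, by omega⟩ ⟨1, by omega⟩ (1 : ℂ) +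
              Matrix.single ⟨n, by omega⟩ ⟨n + 1, by omega⟩ (1 : ℂ))
    (hy : y = Matrix.single ⟨0, by omega⟩ ⟨0, by omega⟩ (1 : ℂ) -
              Matrix.single ⟨1, by omega⟩ ⟨1, by omega⟩ (1 : ℂ) +
              Matrix.single ⟨n, by omega⟩ ⟨n, by omega⟩ (1 : ℂ) -
              Matrix.single ⟨n + 1, by omega⟩ ⟨n + 1, by omega⟩ (1 : ℂ))
    (hz : z = Matrix.single ⟨1, by omega⟩ ⟨n, by omega⟩ (1 : ℂ) +
              Matrix.single ⟨n + 1, by omega⟩ ⟨0, by omega⟩ (1 : ℂ))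
    (h : ⁅x, ⁅y, z⁆⁆ + ⁅y, ⁅z, x⁆⁆ + l • ⁅z, ⁅x, y⁆⁆ = 0) :
    l = 1 := by
  have e01 : (⟨0, by omega⟩ : Fin (2*n)) ≠ ⟨1, by omega⟩ := by simp only [ne_eq, Fin.mk.injEq]; omega
  have e0n : (⟨0, by omega⟩ : Fin (2*n)) ≠ ⟨n, by omega⟩ := by simp only [ne_eq, Fin.mk.injEq]; omega
  have e0n1 : (⟨0, by omega⟩ : Fin (2*n)) ≠ ⟨n+1, by omega⟩ := by simp only [ne_eq, Fin.mk.injEq]; omega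
  have e1n : (⟨1, by omega⟩ : Fin (2*n)) ≠ ⟨n, by omega⟩ := by simp only [ne_eq, Fin.mk.injEq]; omega
  have e1n1 : (⟨1, by omega⟩ : Fin (2*n)) ≠ ⟨n+1, by omega⟩ := by simp only [ne_eq, Fin.mk.injEq]; omega
  have enn1 : (⟨n, by omega⟩ : Fin (2*n)) ≠ ⟨n+1, by omega⟩ := by simp only [ne_eq, Fin.mk.injEq]; omega
  have h0 := congrFun (congrFun h ⟨0, by omega⟩) ⟨n, by omega⟩
  simp only [hx, hy, hz, Ring.lie_def, Matrix.mul_add, Matrix.add_mul, Matrix.mul_sub,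
    Matrix.sub_mul, Matrix.sub_apply, Matrix.add_apply, Matrix.smul_apply, Matrix.zero_apply,
    Matrix.single_mul_single_same, Matrix.single_mul_single_of_ne, Matrix.single_mul_single_of_ne _ _ _ _ e01,
    Matrix.single_mul_single_of_ne _ _ _ _ e0n, Matrix.single_mul_single_of_ne _ _ _ _ e0n1, Matrix.single_mul_single_of_ne _ _ _ _ e1n,
    Matrix.single_mul_single_of_ne _ _ _ _ e1n1, Matrix.single_mul_single_of_ne _ _ _ _ enn1,
    Matrix.single_mul_single_of_ne _ _ _ _ e01.symm, Matrix.single_mul_single_of_ne _ _ _ _ e0n.symm,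
    Matrix.single_mul_single_of_ne _ _ _ _ e0n1.symm, Matrix.single_mul_single_of_ne _ _ _ _ e1n.symm,
    Matrix.single_mul_single_of_ne _ _ _ _ e1n1.symm, Matrix.single_mul_single_of_ne _ _ _ _ enn1.symm] at h0
  simp only [Matrix.mul_zero, Matrix.zero_mul, Matrix.zero_apply,
    Matrix.single_apply_of_row_ne e0n.symm, Matrix.single_apply_of_row_ne e0n1.symm,
    Matrix.single_apply_of_row_ne e01.symm, Matrix.single_apply_same,
    mul_one, one_mul, smul_eq_mul] at h0
  linear_combination h0 / 2
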